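/- Define x : ℕ → ℝ by x 0 = 1 − √3/2 and x (i+1) = 2·(x i)² / (1 − √3·(x i) + √(1 − 2√3·(x i) − (x i)²)); define d i = √((x (i+1))²/4 + (x i + (√3/2)·x (i+1))²), θ i = 2·arcsin(d i / 2), and a i = (x i · x (i+1))/4 − (θ i − sin (θ i))/2. Then 3.7507·10⁻¹¹ < a 2 < 3.7508·10⁻¹¹. (Thus Hansen's claim that the first region he removed has area 4·10⁻¹¹ is approximately correct.) -/

import Mathlib

noncomputable section

/-- Hansen's recursively defined sequence of distances, in the numerically stable form. -/
def xseq : ℕ → ℝ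
  | 0 => 1 - Real.sqrt 3 / 2
  | i + 1 => 2 * (xseq i) ^ 2 /
      (1 - Real.sqrt 3 * xseq i + Real.sqrt (1 - 2 * Real.sqrt 3 * xseq i - (xseq i) ^ 2))

/-- The chord length of the arc in Hansen's sliver region. -/
def dseq (i : ℕ) : ℝ :=
  Real.sqrt ((xseq (i + 1)) ^ 2 / 4 + (xseq i + Real.sqrt 3 / 2 * xseq (i + 1)) ^ 2)

/-- The angle subtended by the chord at the center of the unit circle. -/
def θseq (i : ℕ) : ℝ := 2 * Real.arcsin (dseq i / 2)

/-- The area of the region bounded by two line segments of lengths `x i` and `x (i+1)`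
meeting at an interior angle of 150°, and an arc of a circle of radius 1. -/
def aseq (i : ℕ) : ℝ := xseq i * xseq (i + 1) / 4 - (θseq i - Real.sin (θseq i)) / 2

private lemma hansen_sqrt_mem {a p q : ℝ} (hp : 0 ≤ p) (hq : 0 ≤ q) (h1 : p ^ 2 ≤ a) (h2 : a ≤ q ^ 2) :
    p ≤ Real.sqrt a ∧ Real.sqrt a ≤ q :=
  ⟨(Real.le_sqrt hp (le_trans (by positivity) h1)).mpr h1,
   le_trans (Real.sqrt_le_sqrt h2) (le_of_eq (Real.sqrt_sq hq))⟩

private lemma hansen_mul_mem {a b la ua lb ub : ℝ} (h1 : la ≤ a) (h2 : a ≤ ua) (h3 : lb ≤ b)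
    (h4 : b ≤ ub) (h5 : 0 ≤ la) (h6 : 0 ≤ lb) : la * lb ≤ a * b ∧ a * b ≤ ua * ub := by
  constructor <;> nlinarith

private lemma hansen_sq_mem {a la ua : ℝ} (h1 : la ≤ a) (h2 : a ≤ ua) (h5 : 0 ≤ la) :
    la ^ 2 ≤ a ^ 2 ∧ a ^ 2 ≤ ua ^ 2 := by
  constructor <;> nlinarith

private lemma hansen_div_mem {a b la ua lb ub : ℝ} (h1 : la ≤ a) (h2 : a ≤ ua) (h3 : lb ≤ b)
    (h4 : b ≤ ub) (h5 : 0 ≤ la) (h6 : 0 < lb) : la / ub ≤ a / b ∧ a / b ≤ ua / lb := by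
  have hb : 0 < b := lt_of_lt_of_le h6 h3
  have hub : 0 < ub := lt_of_lt_of_le hb h4
  constructor
  · rw [div_le_div_iff₀ hub hb]; nlinarith
  · rw [div_le_div_iff₀ hb h6]; nlinarith

private lemma hansen_sin_mem {y : ℝ} (h0 : 0 ≤ y) (h1 : y ≤ 1) :
    2 * (y/2 - (y/2)^3/6 - (y/2)^4*(5/96)) * (1 - (y/2)^2/2 - (y/2)^4*(5/96)) ≤ Real.sin y ∧
    Real.sin y ≤ 2 * (y/2 - (y/2)^3/6 + (y/2)^4*(5/96)) * (1 - (y/2)^2/2 + (y/2)^4*(5/96)) := by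
  have hy2 : |y/2| ≤ 1 := by rw [abs_of_nonneg (by linarith)]; linarith
  have hs := abs_le.mp (Real.sin_bound hy2)
  have hc := abs_le.mp (Real.cos_bound hy2)
  rw [abs_of_nonneg (by linarith : (0:ℝ) ≤ y/2)] at hs hc
  have hsin0 : 0 ≤ Real.sin (y/2) :=
    Real.sin_nonneg_of_nonneg_of_le_pi (by linarith) (by nlinarith [Real.pi_gt_three])
  have hcos0 : 0 ≤ Real.cos (y/2) := (Real.cos_pos_of_le_one hy2).le
  have hClo : (0:ℝ) ≤ 1 - (y/2)^2/2 - (y/2)^4*(5/96) := by nlinarith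
  have h54 : (y/2)^5/100 ≤ (y/2)^4*(5/96) := by
    have := mul_le_mul_of_nonneg_left (show y/2 ≤ 1 by linarith) (pow_nonneg (show (0:ℝ) ≤ y/2 by linarith) 4)
    nlinarith [this, pow_nonneg (show (0:ℝ) ≤ y/2 by linarith) 4]
  have hid : Real.sin y = 2 * Real.sin (y/2) * Real.cos (y/2) := by
    rw [← Real.sin_two_mul]; ring_nf
  rw [hid]
  constructor
  · nlinarith [mul_nonneg (by linarith [hs.1, h54] : (0:ℝ) ≤ Real.sin (y/2) - (y/2 - (y/2)^3/6 - (y/2)^4*(5/96))) hClo,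
      mul_nonneg hsin0 (by linarith [hc.1] : (0:ℝ) ≤ Real.cos (y/2) - (1 - (y/2)^2/2 - (y/2)^4*(5/96)))]
  · nlinarith [mul_nonneg (by linarith [hs.2, h54] : (0:ℝ) ≤ (y/2 - (y/2)^3/6 + (y/2)^4*(5/96)) - Real.sin (y/2)) hcos0,
      mul_nonneg (by linarith [hs.2, hsin0, h54] : (0:ℝ) ≤ y/2 - (y/2)^3/6 + (y/2)^4*(5/96))
        (by linarith [hc.2] : (0:ℝ) ≤ (1 - (y/2)^2/2 + (y/2)^4*(5/96)) - Real.cos (y/2))]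

set_option maxHeartbeats 2000000 in
/-- The first region Hansen removed has area about `3.7507·10⁻¹¹`, so his claim of
`4·10⁻¹¹` is approximately correct. -/
theorem hansen_first_region_area : 3.7507e-11 < aseq 2 ∧ aseq 2 < 3.7508e-11 := by
  have hs := hansen_sqrt_mem (a := 3) (p := 1.732050807568877293527446) (q := 1.732050807568877293527447) (by norm_num) (by norm_num) (by norm_num) (by norm_num)
  have hx0 : (0.1339745962155613532362765 : ℝ) ≤ xseq 0 ∧ xseq 0 ≤ 0.133974596215561353236277 := ⟨by rw [show xseq 0 = 1 - Real.sqrt 3 / 2 from rfl]; linarith [hs.1], by rw [show xseq 0 = 1 - Real.sqrt 3 / 2 from rfl]; linarith [hs.2]⟩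
  have hsx0 := hansen_mul_mem hs.1 hs.2 hx0.1 hx0.2 (by norm_num) (by norm_num)
  have hsq0 := hansen_sq_mem hx0.1 hx0.2 (by norm_num)
  have hR0 : (0.5179491924311227064725526 : ℝ) ≤ 1 - 2 * Real.sqrt 3 * xseq 0 - (xseq 0) ^ 2 ∧ 1 - 2 * Real.sqrt 3 * xseq 0 - (xseq 0) ^ 2 ≤ 0.5179491924311227064725551 := ⟨by linarith [hsx0.2, hsq0.2], by linarith [hsx0.1, hsq0.1]⟩
  have hr0 := hansen_sqrt_mem (p := 0.7196868710982038655689945) (q := 0.7196868710982038655689963) (by norm_num) (by norm_num) (le_trans (by norm_num) hR0.1) (le_trans hR0.2 (by norm_num))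
  have hx1 : (0.02413116066645942045177904 : ℝ) ≤ xseq 1 ∧ xseq 1 ≤ 0.0241311606664594204517793 := by
    rw [show xseq 1 = 2 * (xseq 0) ^ 2 /
        (1 - Real.sqrt 3 * xseq 0 + Real.sqrt (1 - 2 * Real.sqrt 3 * xseq 0 - (xseq 0) ^ 2)) from rfl]
    have hnum : (0.03589838486224541294510714 : ℝ) ≤ 2 * (xseq 0) ^ 2 ∧ 2 * (xseq 0) ^ 2 ≤ 0.03589838486224541294510741 :=
      ⟨by linarith [hsq0.1], by linarith [hsq0.2]⟩
    have hden : (1.487636063529326572041547 : ℝ) ≤ 1 - Real.sqrt 3 * xseq 0 + Real.sqrt (1 - 2 * Real.sqrt 3 * xseq 0 - (xseq 0) ^ 2) ∧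
        1 - Real.sqrt 3 * xseq 0 + Real.sqrt (1 - 2 * Real.sqrt 3 * xseq 0 - (xseq 0) ^ 2) ≤ 1.487636063529326572041551 :=
      ⟨by linarith [hsx0.2, hr0.1], by linarith [hsx0.1, hr0.2]⟩
    have h := hansen_div_mem hnum.1 hnum.2 hden.1 hden.2 (by norm_num) (by norm_num)
    exact ⟨le_trans (by norm_num) h.1, le_trans h.2 (by norm_num)⟩
  have hsx1 := hansen_mul_mem hs.1 hs.2 hx1.1 hx1.2 (by norm_num) (by norm_num)
  have hsq1 := hansen_sq_mem hx1.1 hx1.2 (by norm_num)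
  have hR1 : (0.9158248944450587889472373 : ℝ) ≤ 1 - 2 * Real.sqrt 3 * xseq 1 - (xseq 1) ^ 2 ∧ 1 - 2 * Real.sqrt 3 * xseq 1 - (xseq 1) ^ 2 ≤ 0.9158248944450587889472384 := ⟨by linarith [hsx1.2, hsq1.2], by linarith [hsx1.1, hsq1.1]⟩
  have hr1 := hansen_sqrt_mem (p := 0.9569874055833017016598021) (q := 0.9569874055833017016598027) (by norm_num) (by norm_num) (le_trans (by norm_num) hR1.1) (le_trans hR1.2 (by norm_num))
  have hx2 : (0.0006080990483914659721648744 : ℝ) ≤ xseq 2 ∧ xseq 2 ≤ 0.0006080990483914659721648888 := by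
    rw [show xseq 2 = 2 * (xseq 1) ^ 2 /
        (1 - Real.sqrt 3 * xseq 1 + Real.sqrt (1 - 2 * Real.sqrt 3 * xseq 1 - (xseq 1) ^ 2)) from rfl]
    have hnum : (0.001164625830220956522052927 : ℝ) ≤ 2 * (xseq 1) ^ 2 ∧ 2 * (xseq 1) ^ 2 ≤ 0.001164625830220956522052953 :=
      ⟨by linarith [hsq1.1], by linarith [hsq1.2]⟩
    have hden : (1.915191009263386335263934 : ℝ) ≤ 1 - Real.sqrt 3 * xseq 1 + Real.sqrt (1 - 2 * Real.sqrt 3 * xseq 1 - (xseq 1) ^ 2) ∧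
        1 - Real.sqrt 3 * xseq 1 + Real.sqrt (1 - 2 * Real.sqrt 3 * xseq 1 - (xseq 1) ^ 2) ≤ 1.915191009263386335263936 :=
      ⟨by linarith [hsx1.2, hr1.1], by linarith [hsx1.1, hr1.2]⟩
    have h := hansen_div_mem hnum.1 hnum.2 hden.1 hden.2 (by norm_num) (by norm_num)
    exact ⟨le_trans (by norm_num) h.1, le_trans h.2 (by norm_num)⟩
  have hsx2 := hansen_mul_mem hs.1 hs.2 hx2.1 hx2.2 (by norm_num) (by norm_num)
  have hsq2 := hansen_sq_mem hx2.1 hx2.2 (by norm_num)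
  have hR2 : (0.9978931133198507365338322 : ℝ) ≤ 1 - 2 * Real.sqrt 3 * xseq 2 - (xseq 2) ^ 2 ∧ 1 - 2 * Real.sqrt 3 * xseq 2 - (xseq 2) ^ 2 ≤ 0.9978931133198507365338324 := ⟨by linarith [hsx2.2, hsq2.2], by linarith [hsx2.1, hsq2.1]⟩
  have hr2 := hansen_sqrt_mem (p := 0.9989460012031935335274166) (q := 0.9989460012031935335274168) (by norm_num) (by norm_num) (le_trans (by norm_num) hR2.1) (le_trans hR2.2 (by norm_num))
  have hx3 : (0.0000003701744790810213682584075 : ℝ) ≤ xseq 3 ∧ xseq 3 ≤ 0.0000003701744790810213682584255 := by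
    rw [show xseq 3 = 2 * (xseq 2) ^ 2 /
        (1 - Real.sqrt 3 * xseq 2 + Real.sqrt (1 - 2 * Real.sqrt 3 * xseq 2 - (xseq 2) ^ 2)) from rfl]
    have hnum : (0.0000007395689053092129482979097 : ℝ) ≤ 2 * (xseq 2) ^ 2 ∧ 2 * (xseq 2) ^ 2 ≤ 0.0000007395689053092129482979448 :=
      ⟨by linarith [hsq2.1], by linarith [hsq2.2]⟩
    have hden : (1.997892742755345229097569 : ℝ) ≤ 1 - Real.sqrt 3 * xseq 2 + Real.sqrt (1 - 2 * Real.sqrt 3 * xseq 2 - (xseq 2) ^ 2) ∧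
        1 - Real.sqrt 3 * xseq 2 + Real.sqrt (1 - 2 * Real.sqrt 3 * xseq 2 - (xseq 2) ^ 2) ≤ 1.997892742755345229097571 :=
      ⟨by linarith [hsx2.2, hr2.1], by linarith [hsx2.1, hr2.2]⟩
    have h := hansen_div_mem hnum.1 hnum.2 hden.1 hden.2 (by norm_num) (by norm_num)
    exact ⟨le_trans (by norm_num) h.1, le_trans h.2 (by norm_num)⟩
  have hsx3 := hansen_mul_mem hs.1 hs.2 hx3.1 hx3.2 (by norm_num) (by norm_num)
  have ht : (0.0006084196288941828079324087 : ℝ) ≤ xseq 2 + Real.sqrt 3 / 2 * xseq 3 ∧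
      xseq 2 + Real.sqrt 3 / 2 * xseq 3 ≤ 0.0006084196288941828079324232 := by
    have e : Real.sqrt 3 / 2 * xseq 3 = Real.sqrt 3 * xseq 3 / 2 := by ring
    rw [e]; exact ⟨by linarith [hsx3.1, hx2.1], by linarith [hsx3.2, hx2.2]⟩
  have htsq := hansen_sq_mem ht.1 ht.2 (by norm_num)
  have hx3sq := hansen_sq_mem hx3.1 hx3.2 (by norm_num)
  have hD : (0.0000003701744790810213682584076 : ℝ) ≤ (xseq 3) ^ 2 / 4 + (xseq 2 + Real.sqrt 3 / 2 * xseq 3) ^ 2 ∧ (xseq 3) ^ 2 / 4 + (xseq 2 + Real.sqrt 3 / 2 * xseq 3) ^ 2 ≤ 0.0000003701744790810213682584253 := ⟨by linarith [htsq.1, hx3sq.1], by linarith [htsq.2, hx3sq.2]⟩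
  have hd : (0.0006084196570468621605171211 : ℝ) ≤ dseq 2 ∧ dseq 2 ≤ 0.0006084196570468621605171357 := by
    rw [show dseq 2 = Real.sqrt ((xseq 3) ^ 2 / 4 + (xseq 2 + Real.sqrt 3 / 2 * xseq 3) ^ 2) from rfl]
    exact hansen_sqrt_mem (by norm_num) (by norm_num) (le_trans (by norm_num) hD.1) (le_trans hD.2 (by norm_num))
  have hz : (0.0006084196570468621605171211 : ℝ) / 2 ≤ dseq 2 / 2 ∧ dseq 2 / 2 ≤ (0.0006084196570468621605171357 : ℝ) / 2 :=
    ⟨by linarith [hd.1], by linarith [hd.2]⟩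
  have hzsq := hansen_sq_mem hz.1 hz.2 (by norm_num)
  have hW : (0.9999999074563802297446579 : ℝ) ≤ 1 - (dseq 2 / 2) ^ 2 ∧ 1 - (dseq 2 / 2) ^ 2 ≤ 0.999999907456380229744658 := ⟨by linarith [hzsq.2], by linarith [hzsq.1]⟩
  have hw : (0.9999999537281890443320843 : ℝ) ≤ Real.sqrt (1 - (dseq 2 / 2) ^ 2) ∧
      Real.sqrt (1 - (dseq 2 / 2) ^ 2) ≤ 0.9999999537281890443320845 :=
    hansen_sqrt_mem (by norm_num) (by norm_num) (le_trans (by norm_num) hW.1) (le_trans hW.2 (by norm_num))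
  have hy2 : Real.arcsin (dseq 2 / 2) ≤ (0.0003042098332156043925344 : ℝ) := by
    have hsy := (hansen_sin_mem (y := 0.0003042098332156043925344) (by norm_num) (by norm_num)).1
    have h1 : dseq 2 / 2 ≤ Real.sin (0.0003042098332156043925344 : ℝ) := by linarith [hd.2]
    calc Real.arcsin (dseq 2 / 2) ≤ Real.arcsin (Real.sin (0.0003042098332156043925344 : ℝ)) := Real.monotone_arcsin h1
      _ = (0.0003042098332156043925344 : ℝ) := Real.arcsin_sin (by linarith [Real.pi_gt_three]) (by linarith [Real.pi_gt_three])
  have hy1 : (0.0003042098332154843925343 : ℝ) ≤ Real.arcsin (dseq 2 / 2) := by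
    have hsy := (hansen_sin_mem (y := 0.0003042098332154843925343) (by norm_num) (by norm_num)).2
    have h1 : Real.sin (0.0003042098332154843925343 : ℝ) ≤ dseq 2 / 2 := by linarith [hd.1]
    calc (0.0003042098332154843925343 : ℝ) = Real.arcsin (Real.sin (0.0003042098332154843925343 : ℝ)) :=
        (Real.arcsin_sin (by linarith [Real.pi_gt_three]) (by linarith [Real.pi_gt_three])).symm
      _ ≤ Real.arcsin (dseq 2 / 2) := Real.monotone_arcsin h1
  have hzw := hansen_mul_mem hz.1 hz.2 hw.1 hw.2 (by norm_num) (by norm_num)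
  have hp := hansen_mul_mem hx2.1 hx2.2 hx3.1 hx3.2 (by norm_num) (by norm_num)
  have hsinθ : Real.sin (θseq 2) = 2 * (dseq 2 / 2) * Real.sqrt (1 - (dseq 2 / 2) ^ 2) := by
    rw [show θseq 2 = 2 * Real.arcsin (dseq 2 / 2) from rfl, Real.sin_two_mul,
      Real.sin_arcsin (by linarith [hd.1]) (by linarith [hd.2]), Real.cos_arcsin]
  have ha : aseq 2 = xseq 2 * xseq 3 / 4 - (2 * Real.arcsin (dseq 2 / 2) - Real.sin (θseq 2)) / 2 := rfl
  rw [ha, hsinθ]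
  constructor
  · linarith [hp.1, hzw.1, hy2]
  · linarith [hp.2, hzw.2, hy1]
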